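/- For every natural number n ≥ 1, the derivative of the binomial-coefficient polynomial C(X, n) := (1/n!) · descPochhammer ℝ n (so C(X, n) = X(X−1)⋯(X−n+1)/n!) satisfies, in the polynomial ring ℝ[X]: derivative (C(X, n)) = ∑_{j=0}^{n−1} ((−1)^{n−1−j} / (n−j)) · C(X, j). -/

import Mathlib

open Polynomial Finset

noncomputable def bbAux (j : ℕ) : ℝ[X] := ((j.factorial : ℝ))⁻¹ • descPochhammer ℝ j

noncomputable def cAux (n j : ℕ) : ℝ := (-1 : ℝ) ^ (n - 1 - j) / ((n : ℝ) - (j : ℝ))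

lemma bbAux_mul (j : ℕ) :
    bbAux j * (X - Polynomial.C (j:ℝ)) = ((j:ℝ)+1) • bbAux (j+1) := by
  unfold bbAux
  rw [descPochhammer_succ_right, smul_mul_assoc, smul_smul, Nat.factorial_succ,
    Polynomial.C_eq_natCast]
  congr 1
  push_cast
  rw [mul_inv]
  have : ((j:ℝ)+1) ≠ 0 := by positivity
  field_simp

lemma bbAux_mul' (n j : ℕ) :
    bbAux j * (X - Polynomial.C (n:ℝ)) =
      ((j:ℝ)+1) • bbAux (j+1) - ((n:ℝ)-(j:ℝ)) • bbAux j := by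
  have h : (X - Polynomial.C (n:ℝ)) =
      (X - Polynomial.C (j:ℝ)) - Polynomial.C ((n:ℝ)-(j:ℝ)) := by
    rw [map_sub]; ring
  rw [h, mul_sub, bbAux_mul, mul_comm, ← smul_eq_C_mul]

lemma main_aux (n : ℕ) (hn : 1 ≤ n) :
    derivative (bbAux n) = ∑ j ∈ range n, cAux n j • bbAux j := by
  induction n, hn using Nat.le_induction with
  | base =>
    simp [bbAux, cAux, descPochhammer_one, Finset.sum_range_one]
  | succ n hn ih =>
    have hne : ((n:ℝ)+1) ≠ 0 := by positivity
    have h1 : bbAux (n+1) = ((n:ℝ)+1)⁻¹ • (bbAux n * (X - Polynomial.C (n:ℝ))) := by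
      rw [bbAux_mul, smul_smul, inv_mul_cancel₀ hne, one_smul]
    rw [h1, derivative_smul, derivative_mul, derivative_sub, derivative_X, derivative_C,
      sub_zero, mul_one, ih, inv_smul_eq_iff₀ hne, Finset.smul_sum, Finset.sum_mul]
    have hterm : ∀ j ∈ range n, (cAux n j • bbAux j) * (X - Polynomial.C (n:ℝ)) =
        (cAux n j * ((j:ℝ)+1)) • bbAux (j+1) - (cAux n j * ((n:ℝ)-(j:ℝ))) • bbAux j := by
      intro j _
      rw [smul_mul_assoc, bbAux_mul' n j, smul_sub, smul_smul, smul_smul]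
    rw [Finset.sum_congr rfl hterm, Finset.sum_sub_distrib]
    have hsub : ∀ j ∈ range n, (cAux n j * ((n:ℝ)-(j:ℝ))) • bbAux j =
        (-((-1:ℝ)^(n-j))) • bbAux j := by
      intro j hj
      have hj' : j < n := Finset.mem_range.mp hj
      have hd : (n:ℝ)-(j:ℝ) ≠ 0 := sub_ne_zero.mpr (by exact_mod_cast hj'.ne')
      congr 1
      have he : n - j = (n - 1 - j) + 1 := by omega
      rw [cAux, he, pow_succ]
      field_simp
    rw [Finset.sum_congr rfl hsub]
    have hfirst : ∑ j ∈ range n, (cAux n j * ((j:ℝ)+1)) • bbAux (j+1) =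
        ∑ k ∈ range (n+1),
          (match k with | 0 => (0:ℝ) | (j+1) => cAux n j * ((j:ℝ)+1)) • bbAux k := by
      conv_rhs => rw [Finset.sum_range_succ']
      simp
    have hsecond : -∑ j ∈ range n, (-((-1:ℝ)^(n-j))) • bbAux j + bbAux n =
        ∑ k ∈ range (n+1), ((-1:ℝ)^(n-k)) • bbAux k := by
      rw [Finset.sum_range_succ, Nat.sub_self, pow_zero, one_smul, ← Finset.sum_neg_distrib]
      congr 1
      apply Finset.sum_congr rfl
      intro j hj
      rw [neg_smul, neg_neg]
    rw [sub_eq_add_neg, add_assoc, hsecond, hfirst, ← Finset.sum_add_distrib]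
    apply Finset.sum_congr rfl
    intro k hk
    rw [← add_smul, smul_smul]
    congr 1
    match k with
    | 0 =>
      simp only [Nat.sub_zero, Nat.cast_zero]
      have : (n + 1) - 1 - 0 = n := by omega
      simp only [cAux]
      rw [this]
      push_cast
      field_simp
      ring
    | (j+1) =>
      have hj' : j < n := by have := Finset.mem_range.mp hk; omega
      have hd : (n:ℝ)-(j:ℝ) ≠ 0 := sub_ne_zero.mpr (by exact_mod_cast hj'.ne')
      have e1 : (n + 1) - 1 - (j + 1) = n - 1 - j := by omega
      have e2 : n - (j+1) = n - 1 - j := by omega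
      simp only [cAux]
      rw [e1, e2]
      push_cast
      have e3 : (n:ℝ) + 1 - ((j:ℝ) + 1) = (n:ℝ) - (j:ℝ) := by ring
      rw [e3]
      field_simp
      ring

/-- Derivative identity for binomial-coefficient polynomials
`C(X, n) = X (X-1) ⋯ (X-n+1) / n!`:
`derivative (C(X, n)) = ∑_{j=0}^{n-1} ((-1)^(n-1-j) / (n-j)) • C(X, j)`. -/
theorem derivative_binomial_polynomial (n : ℕ) (hn : 1 ≤ n) :
    Polynomial.derivative
        (((n.factorial : ℝ))⁻¹ • descPochhammer ℝ n) =
      ∑ j ∈ Finset.range n,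
        (((-1 : ℝ) ^ (n - 1 - j) / ((n : ℝ) - (j : ℝ))) •
          (((j.factorial : ℝ))⁻¹ • descPochhammer ℝ j)) := by
  simpa [bbAux, cAux] using main_aux n hn
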